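/- The optimal binary discriminator: the function maximizing E_{p(m,y)}[log σ(f(m,y))] + E_{p_M⊗p_Y}[log(1 − σ(f(m,y)))] over all f : M × Y → ℝ satisfies σ(f*(m,y)) = p(m,y)/(p(m,y) + p_M(m)p_Y(y)) wherever p(m,y) + p_M(m)p_Y(y) > 0; equivalently exp(f*(m,y)) = p(y|m)/p_Y(y), the pointwise mutual information ratio. -/

import Mathlib

private lemma aux_gibbs (a b s t : ℝ) (ha : 0 < a) (hb : 0 < b) (hs0 : 0 < s) (hs1 : s < 1)
    (ht : t = a / (a + b)) :
    a * Real.log s + b * Real.log (1 - s) ≤ a * Real.log t + b * Real.log (1 - t) := by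
  have hab : 0 < a + b := by linarith
  have ht0 : 0 < t := by rw [ht]; positivity
  have ht1 : 1 - t = b / (a + b) := by rw [ht]; field_simp; ring
  have ht1pos : 0 < 1 - t := by rw [ht1]; positivity
  have h1 : Real.log s - Real.log t ≤ s / t - 1 := by
    have := Real.log_le_sub_one_of_pos (show 0 < s / t by positivity)
    rwa [Real.log_div hs0.ne' ht0.ne'] at this
  have h2 : Real.log (1 - s) - Real.log (1 - t) ≤ (1 - s) / (1 - t) - 1 := by
    have := Real.log_le_sub_one_of_pos (show 0 < (1 - s) / (1 - t) by
      apply div_pos <;> linarith)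
    rwa [Real.log_div (by linarith) ht1pos.ne'] at this
  have e1 : a * (s / t - 1) = (a + b) * s - a := by
    rw [ht]; field_simp
  have e2 : b * ((1 - s) / (1 - t) - 1) = (a + b) * (1 - s) - b := by
    rw [ht1]; field_simp
  nlinarith [mul_le_mul_of_nonneg_left h1 ha.le, mul_le_mul_of_nonneg_left h2 hb.le]

/-- The optimal binary discriminator: if `σ (f⋆ (m, y)) = p (m,y) / (p (m,y) + p_M m * p_Y y)`
wherever `p (m,y) + p_M m * p_Y y > 0`, then `f⋆` maximizes the NCE-binary objective
`E_{p}[log σ(f)] + E_{p_M ⊗ p_Y}[log (1 − σ(f))]`, and equivalently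
`exp (f⋆ (m,y)) = p (m,y) / (p_M m * p_Y y)`, the pointwise mutual information ratio. -/
theorem stmt_12 {M Y : Type*} [Fintype M] [Fintype Y] (p : M × Y → ℝ)
    (hp0 : ∀ x, 0 ≤ p x) (hp1 : ∑ x, p x = 1)
    (pM : M → ℝ) (pY : Y → ℝ)
    (hpM : ∀ m, pM m = ∑ y, p (m, y)) (hpY : ∀ y, pY y = ∑ m, p (m, y))
    (σ : ℝ → ℝ) (hσ : ∀ x, σ x = 1 / (1 + Real.exp (-x)))
    (fstar : M × Y → ℝ)
    (hfstar : ∀ m y, 0 < p (m, y) + pM m * pY y →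
      σ (fstar (m, y)) = p (m, y) / (p (m, y) + pM m * pY y)) :
    (∀ f : M × Y → ℝ,
      (∑ m, ∑ y, p (m, y) * Real.log (σ (f (m, y)))) +
          (∑ m, ∑ y, pM m * pY y * Real.log (1 - σ (f (m, y)))) ≤
        (∑ m, ∑ y, p (m, y) * Real.log (σ (fstar (m, y)))) +
          (∑ m, ∑ y, pM m * pY y * Real.log (1 - σ (fstar (m, y))))) ∧
    (∀ m y, 0 < pM m * pY y →
      Real.exp (fstar (m, y)) = p (m, y) / (pM m * pY y)) := by
  -- basic facts about σ
  have hexp : ∀ x : ℝ, 0 < 1 + Real.exp (-x) := fun x => by positivity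
  have hσ0 : ∀ x, 0 < σ x := fun x => by rw [hσ]; positivity
  have hσ1 : ∀ x, σ x < 1 := fun x => by
    rw [hσ]
    rw [div_lt_one (hexp x)]
    have := Real.exp_pos (-x)
    linarith
  -- both a and b are positive wherever a + b > 0
  have hkey : ∀ m y, 0 < p (m, y) + pM m * pY y →
      0 < p (m, y) ∧ 0 < pM m * pY y := by
    intro m y h
    have hs := hfstar m y h
    constructor
    · have := hσ0 (fstar (m, y))
      rw [hs] at this
      exact (div_pos_iff.mp this).resolve_right (fun ⟨_, h2⟩ => absurd h2 (not_lt.mpr h.le)) |>.1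
    · have := hσ1 (fstar (m, y))
      rw [hs, div_lt_one h] at this
      linarith
  constructor
  · intro f
    have hrw : ∀ g : M × Y → ℝ,
        (∑ m, ∑ y, p (m, y) * Real.log (σ (g (m, y)))) +
          (∑ m, ∑ y, pM m * pY y * Real.log (1 - σ (g (m, y)))) =
        ∑ m, ∑ y, (p (m, y) * Real.log (σ (g (m, y))) +
          pM m * pY y * Real.log (1 - σ (g (m, y)))) := by
      intro g
      rw [← Finset.sum_add_distrib]
      congr 1; ext m
      rw [← Finset.sum_add_distrib]
    rw [hrw f, hrw fstar]
    apply Finset.sum_le_sum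
    intro m _
    apply Finset.sum_le_sum
    intro y _
    have hpMnn : 0 ≤ pM m := by rw [hpM]; exact Finset.sum_nonneg fun y _ => hp0 _
    have hpYnn : 0 ≤ pY y := by rw [hpY]; exact Finset.sum_nonneg fun m _ => hp0 _
    rcases eq_or_lt_of_le (add_nonneg (hp0 (m, y)) (mul_nonneg hpMnn hpYnn)) with h | h
    · have h1 : p (m, y) = 0 := by nlinarith [hp0 (m, y), mul_nonneg hpMnn hpYnn]
      have h2 : pM m * pY y = 0 := by nlinarith [hp0 (m, y), mul_nonneg hpMnn hpYnn]
      rw [h1, h2]; simp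
    · obtain ⟨ha, hb⟩ := hkey m y h
      exact aux_gibbs _ _ _ _ ha hb (hσ0 _) (hσ1 _) (hfstar m y h)
  · intro m y hb
    have hab : 0 < p (m, y) + pM m * pY y := by
      have := hp0 (m, y); linarith
    have ha : 0 < p (m, y) := (hkey m y hab).1
    have hs := hfstar m y hab
    rw [hσ] at hs
    set x := fstar (m, y) with hx
    have hex : 0 < Real.exp (-x) := Real.exp_pos _
    -- from 1/(1+e^{-x}) = a/(a+b) derive e^{-x} = b/a
    have h1 : Real.exp (-x) = pM m * pY y / p (m, y) := by
      field_simp at hs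
      field_simp
      nlinarith [hs]
    rw [Real.exp_neg] at h1
    rw [show Real.exp x = (Real.exp x)⁻¹⁻¹ by rw [inv_inv], h1]
    rw [inv_div]
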